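/- Let n ≥ 1, let f : ℝ → ℂ be n times continuously differentiable, and let w : ℝ → ℂ be integrable with f^{(n)}(x) = ∫_ℝ w(t)·e^{ixt} dt for all x ∈ ℝ. Then for all pairwise distinct x₀,…,x_n ∈ ℝ one has f^{[n]}(x₀,…,x_n) = ∫_{T_n} ∫_ℝ w(t)·exp(i t (s₀x₀ + s₁x₁ + ⋯ + s_n x_n)) dt ds, where T_n := {(s₁,…,s_n) ∈ ℝ^n : s_j ≥ 0 for all j and Σ_{j=1}^n s_j ≤ 1} carries Lebesgue measure and s₀ := 1 − Σ_{j=1}^n s_j. -/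

import Mathlib

open MeasureTheory

/-- The `m`-th order divided difference of `f : ℝ → ℂ` at the `m+1` points `x 0, …, x m`,
given by the explicit symmetric formula (valid for pairwise distinct points). -/
noncomputable def divDiff {m : ℕ} (f : ℝ → ℂ) (x : Fin (m + 1) → ℝ) : ℂ :=
  ∑ j, f (x j) / ∏ k ∈ Finset.univ.erase j, ((x j : ℂ) - (x k : ℂ))

open Finset

lemma prod_erase_succAbove {m : ℕ} (x : Fin (m + 2) → ℝ) (p : Fin (m + 2)) (j' : Fin (m + 1)) :
    (∏ k ∈ Finset.univ.erase j', ((x (p.succAbove j') : ℂ) - x (p.succAbove k))) *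
      ((x (p.succAbove j') : ℂ) - x p)
    = ∏ k ∈ Finset.univ.erase (p.succAbove j'), ((x (p.succAbove j') : ℂ) - x k) := by
  set j : Fin (m + 2) := p.succAbove j' with hj
  have hpj : p ≠ j := (Fin.succAbove_ne p j').symm
  have hmem : p ∈ Finset.univ.erase j := Finset.mem_erase.2 ⟨hpj, Finset.mem_univ p⟩
  have himg : (Finset.univ.erase j).erase p = (Finset.univ.erase j').image p.succAbove := by
    ext k
    simp only [Finset.mem_erase, Finset.mem_image, Finset.mem_univ, and_true]
    constructor
    · rintro ⟨hkp, hkj⟩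
      obtain ⟨k', hk'⟩ := Fin.exists_succAbove_eq hkp
      exact ⟨k', fun h => hkj (by rw [← hk', h]), hk'⟩
    · rintro ⟨k', hk'j, rfl⟩
      exact ⟨Fin.succAbove_ne p k', fun h => hk'j (Fin.succAbove_right_injective h)⟩
  rw [← Finset.mul_prod_erase _ _ hmem, himg,
    Finset.prod_image (fun a _ b _ h => Fin.succAbove_right_injective h)]
  ring

lemma prod_erase_ne_zero {m : ℕ} {x : Fin (m + 1) → ℝ} (hx : Function.Injective x)
    (j : Fin (m + 1)) :
    (∏ k ∈ Finset.univ.erase j, ((x j : ℂ) - x k)) ≠ 0 := by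
  refine Finset.prod_ne_zero_iff.2 fun k hk => ?_
  have hkj : k ≠ j := (Finset.mem_erase.1 hk).1
  have : x j ≠ x k := fun h => hkj (hx h).symm
  exact sub_ne_zero.2 (by exact_mod_cast this)

lemma divDiff_comp_succAbove {m : ℕ} (f : ℝ → ℂ) {x : Fin (m + 2) → ℝ}
    (hx : Function.Injective x) (p : Fin (m + 2)) :
    divDiff f (x ∘ p.succAbove) =
      ∑ j, f (x j) * ((x j : ℂ) - x p) / ∏ k ∈ Finset.univ.erase j, ((x j : ℂ) - x k) := by
  rw [Fin.sum_univ_succAbove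
    (fun j => f (x j) * ((x j : ℂ) - x p) / ∏ k ∈ Finset.univ.erase j, ((x j : ℂ) - x k)) p]
  simp only [sub_self, mul_zero, zero_div, zero_add]
  unfold divDiff
  refine Finset.sum_congr rfl fun j' _ => ?_
  have h1 := prod_erase_succAbove x p j'
  have h2 : ((x (p.succAbove j') : ℂ) - x p) ≠ 0 := by
    have : x (p.succAbove j') ≠ x p := fun h => Fin.succAbove_ne p j' (hx h)
    exact sub_ne_zero.2 (by exact_mod_cast this)
  simp only [Function.comp_apply]
  rw [← h1, mul_div_mul_right _ _ h2]

lemma divDiff_rec {m : ℕ} (f : ℝ → ℂ) {x : Fin (m + 2) → ℝ} (hx : Function.Injective x) :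
    divDiff f (x ∘ Fin.succ) - divDiff f (x ∘ (Fin.succAbove 1)) =
      ((x 1 : ℂ) - x 0) * divDiff f x := by
  have h0 := divDiff_comp_succAbove f hx 0
  have h1 := divDiff_comp_succAbove f hx 1
  rw [Fin.succAbove_zero] at h0
  rw [h0, h1, divDiff, ← Finset.sum_sub_distrib, Finset.mul_sum]
  refine Finset.sum_congr rfl fun j _ => ?_
  ring


lemma isClosed_T (n : ℕ) : IsClosed {s : Fin n → ℝ | (∀ j, 0 ≤ s j) ∧ ∑ j, s j ≤ 1} := by
  have : {s : Fin n → ℝ | (∀ j, 0 ≤ s j) ∧ ∑ j, s j ≤ 1}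
      = (⋂ j, {s : Fin n → ℝ | 0 ≤ s j}) ∩ {s : Fin n → ℝ | ∑ j, s j ≤ 1} := by
    ext s; simp [Set.mem_iInter, Set.mem_setOf_eq]
  rw [this]
  exact IsClosed.inter
    (isClosed_iInter fun j => isClosed_le continuous_const (continuous_apply j))
    (isClosed_le (continuous_finset_sum _ fun j _ => continuous_apply j) continuous_const)

lemma isCompact_T (n : ℕ) : IsCompact {s : Fin n → ℝ | (∀ j, 0 ≤ s j) ∧ ∑ j, s j ≤ 1} := by
  refine Metric.isCompact_of_isClosed_isBounded (isClosed_T n) ?_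
  refine Bornology.IsBounded.subset ?_ (t := Set.pi Set.univ fun _ : Fin n => Set.Icc (0:ℝ) 1) ?_
  · exact (isCompact_univ_pi fun _ => isCompact_Icc).isBounded
  · rintro s ⟨h0, h1⟩ j _
    exact ⟨h0 j, le_trans (Finset.single_le_sum (fun i _ => h0 i) (Finset.mem_univ j)) h1⟩

lemma continuous_combo {n : ℕ} (c : ℝ) (y : Fin n → ℝ) :
    Continuous fun s : Fin n → ℝ => (1 - ∑ j, s j) * c + ∑ j, s j * y j :=
  (((continuous_const.sub (continuous_finset_sum _ fun j _ => continuous_apply j)).mul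
    continuous_const).add (continuous_finset_sum _ fun j _ => (continuous_apply j).mul
      continuous_const))

theorem HG : ∀ (n : ℕ) (f : ℝ → ℂ), ContDiff ℝ n f → ∀ (x : Fin (n+1) → ℝ),
    Function.Injective x →
    divDiff f x = ∫ s in {s : Fin n → ℝ | (∀ j, 0 ≤ s j) ∧ ∑ j, s j ≤ 1},
      iteratedDeriv n f ((1 - ∑ j, s j) * x 0 + ∑ j, s j * x (Fin.succ j)) := by
  intro n
  induction n with
  | zero =>
    intro f hf x hx
    have hT : {s : Fin 0 → ℝ | (∀ j, 0 ≤ s j) ∧ ∑ j, s j ≤ 1} = Set.univ := by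
      ext s; simp
    rw [hT, Measure.restrict_univ, integral_unique]
    have hvol : (volume : Measure (Fin 0 → ℝ)) Set.univ = 1 := by
      rw [volume_pi, Measure.pi_of_empty]; simp
    rw [measureReal_def, hvol]
    simp [divDiff, iteratedDeriv_zero]
  | succ n IH =>
    intro f hf x hx
    set T1 : Set (Fin (n+1) → ℝ) := {s | (∀ j, 0 ≤ s j) ∧ ∑ j, s j ≤ 1} with hT1
    set T0 : Set (Fin n → ℝ) := {s | (∀ j, 0 ≤ s j) ∧ ∑ j, s j ≤ 1} with hT0
    set g : ℝ → ℂ := iteratedDeriv (n+1) f with hg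
    set G : ℝ → ℂ := iteratedDeriv n f with hGdef
    set d : ℝ := x 1 - x 0 with hd
    have hdne : d ≠ 0 := sub_ne_zero.2 (fun h => (by norm_num : (1:Fin (n+2)) ≠ 0) (hx h))
    have hdC : (d : ℂ) ≠ 0 := Complex.ofReal_ne_zero.2 hdne
    set u : (Fin (n+1) → ℝ) → ℝ :=
      fun s => (1 - ∑ j, s j) * x 0 + ∑ j, s j * x (Fin.succ j) with hu
    set u1 : (Fin n → ℝ) → ℝ :=
      fun s => (1 - ∑ j, s j) * x 1 + ∑ j, s j * x (Fin.succ (Fin.succ j)) with hu1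
    set u2 : (Fin n → ℝ) → ℝ :=
      fun s => (1 - ∑ j, s j) * x 0 + ∑ j, s j * x (Fin.succ (Fin.succ j)) with hu2
    have hgc : Continuous g := hf.continuous_iteratedDeriv (n+1) le_rfl
    have hGc : Continuous G := hf.continuous_iteratedDeriv n (by exact_mod_cast Nat.cast_le.2 (Nat.le_succ n))
    have hGderiv : ∀ y : ℝ, HasDerivAt G (g y) y := by
      intro y
      have hdiff : Differentiable ℝ G :=
        hf.differentiable_iteratedDeriv n (by exact_mod_cast Nat.cast_lt.2 (Nat.lt_succ_self n))
      have := (hdiff y).hasDerivAt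
      rwa [hg, iteratedDeriv_succ]
    -- the goal
    have hT1m : MeasurableSet T1 := (isClosed_T (n+1)).measurableSet
    have hT0m : MeasurableSet T0 := (isClosed_T n).measurableSet
    -- indicator form
    rw [show (∫ s in T1, g (u s)) = ∫ s, T1.indicator (fun s => g (u s)) s from
      (integral_indicator hT1m).symm]
    -- transfer to product
    have hmp := (volume_preserving_piFinSuccAbove (fun _ : Fin (n+1) => ℝ) 0).symm
    have hemb := (MeasurableEquiv.piFinSuccAbove (fun _ : Fin (n+1) => ℝ) 0).symm.measurableEmbedding
    rw [← hmp.integral_comp hemb (T1.indicator fun s => g (u s))]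
    -- integrand as function of (a, s')
    have hsymm : ∀ p : ℝ × (Fin n → ℝ),
        (MeasurableEquiv.piFinSuccAbove (fun _ : Fin (n+1) => ℝ) 0).symm p
          = (0 : Fin (n+1)).insertNth p.1 p.2 := by
      intro p
      rw [MeasurableEquiv.piFinSuccAbove_symm_apply]
      rfl
    -- integrability
    have hint : Integrable (fun p : ℝ × (Fin n → ℝ) =>
        T1.indicator (fun s => g (u s))
          ((MeasurableEquiv.piFinSuccAbove (fun _ : Fin (n+1) => ℝ) 0).symm p)) := by
      rw [show (fun p : ℝ × (Fin n → ℝ) => T1.indicator (fun s => g (u s))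
          ((MeasurableEquiv.piFinSuccAbove (fun _ : Fin (n+1) => ℝ) 0).symm p))
        = (T1.indicator fun s => g (u s)) ∘
          (MeasurableEquiv.piFinSuccAbove (fun _ : Fin (n+1) => ℝ) 0).symm from rfl]
      rw [hmp.integrable_comp_emb hemb]
      exact ((hgc.comp (continuous_combo (x 0) (fun j => x j.succ))).continuousOn.integrableOn_compact
        (isCompact_T (n+1))).integrable_indicator hT1m
    -- Fubini
    rw [Measure.volume_eq_prod] at hint ⊢
    rw [integral_prod_symm _ hint]
    -- pointwise inner integral
    have key : ∀ s' : Fin n → ℝ,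
        (∫ a : ℝ, T1.indicator (fun s => g (u s))
          ((MeasurableEquiv.piFinSuccAbove (fun _ : Fin (n+1) => ℝ) 0).symm (a, s')))
        = T0.indicator (fun s' => G (u1 s') / (d:ℂ) - G (u2 s') / (d:ℂ)) s' := by
      intro s'
      have hins : ∀ a : ℝ, (0 : Fin (n+1)).insertNth a s' = (Fin.cons a s' : Fin (n+1) → ℝ) :=
        by intro a; exact Fin.insertNth_zero' a s'
      have hmem : ∀ a : ℝ, ((0 : Fin (n+1)).insertNth a s' ∈ T1)
          ↔ ((0 ≤ a ∧ ∀ j, 0 ≤ s' j) ∧ a + ∑ j, s' j ≤ 1) := by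
        intro a
        rw [hT1, hins]
        simp only [Set.mem_setOf_eq, Fin.forall_fin_succ, Fin.sum_univ_succ,
          Fin.cons_zero, Fin.cons_succ]
      have hucomp : ∀ a : ℝ, u ((0 : Fin (n+1)).insertNth a s') = u2 s' + a * d := by
        intro a
        rw [hu, hu2, hd, hins]
        simp only [Fin.sum_univ_succ, Fin.cons_zero, Fin.cons_succ, Fin.succ_zero_eq_one]
        ring
      simp_rw [hsymm]
      by_cases hs' : s' ∈ T0
      · obtain ⟨h0, h1⟩ := hs'
        have hiff : ∀ a : ℝ, ((0 : Fin (n+1)).insertNth a s' ∈ T1)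
            ↔ a ∈ Set.Icc (0:ℝ) (1 - ∑ j, s' j) := by
          intro a
          rw [hmem a, Set.mem_Icc]
          constructor
          · rintro ⟨⟨ha0, -⟩, ha1⟩; exact ⟨ha0, by linarith⟩
          · rintro ⟨ha0, ha1⟩; exact ⟨⟨ha0, h0⟩, by linarith⟩
        have heq : ∀ a : ℝ, T1.indicator (fun s => g (u s)) ((0 : Fin (n+1)).insertNth a s')
            = (Set.Icc (0:ℝ) (1 - ∑ j, s' j)).indicator
                (fun a => g (u2 s' + a * d)) a := by
          intro a
          rw [Set.indicator_apply, Set.indicator_apply]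
          by_cases hmema : (0 : Fin (n+1)).insertNth a s' ∈ T1
          · rw [if_pos hmema, if_pos ((hiff a).1 hmema), hucomp a]
          · rw [if_neg hmema, if_neg (fun h => hmema ((hiff a).2 h))]
        simp_rw [heq]
        rw [integral_indicator measurableSet_Icc, integral_Icc_eq_integral_Ioc,
          ← intervalIntegral.integral_of_le (by linarith : (0:ℝ) ≤ 1 - ∑ j, s' j)]
        have hftc := intervalIntegral.integral_eq_sub_of_hasDerivAt
          (f := fun a : ℝ => G (u2 s' + a * d) / (d:ℂ))
          (f' := fun a : ℝ => g (u2 s' + a * d))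
          (a := (0:ℝ)) (b := 1 - ∑ j, s' j)
          (fun a _ => by
            have h1' : HasDerivAt (fun a : ℝ => u2 s' + a * d) d a := by
              simpa using ((hasDerivAt_id a).mul_const d).const_add (u2 s')
            have h2' := HasDerivAt.scomp a (hGderiv (u2 s' + a * d)) h1'
            have h3' := h2'.div_const (d : ℂ)
            have h4 : (d • g (u2 s' + a * d)) / (d : ℂ) = g (u2 s' + a * d) := by
              rw [Complex.real_smul, mul_comm, mul_div_assoc, div_self hdC, mul_one]
            rw [h4] at h3'
            exact h3')
          ((hgc.comp (by fun_prop : Continuous fun a : ℝ => u2 s' + a * d)).intervalIntegrable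
            0 (1 - ∑ j, s' j))
        have ee1 : u2 s' + (1 - ∑ j, s' j) * d = u1 s' := by rw [hu1, hu2, hd]; ring
        have ee2 : u2 s' + (0:ℝ) * d = u2 s' := by ring
        rw [hftc]
        simp only [ee1, ee2]
        rw [Set.indicator_of_mem (show s' ∈ T0 from ⟨h0, h1⟩)]
      · rw [Set.indicator_of_notMem hs']
        have hzero : ∀ a : ℝ, T1.indicator (fun s => g (u s)) ((0 : Fin (n+1)).insertNth a s')
            = 0 := by
          intro a
          refine Set.indicator_of_notMem (fun hmema => hs' ?_) _
          obtain ⟨⟨ha0, hj⟩, ha1⟩ := (hmem a).1 hmema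
          exact ⟨hj, by linarith⟩
        simp_rw [hzero, integral_zero]
    simp_rw [key]
    rw [integral_indicator hT0m]
    -- integrability of the two pieces on T0
    have hcont1 : Continuous fun s' : Fin n → ℝ => G (u1 s') :=
      hGc.comp (continuous_combo (x 1) (fun j => x j.succ.succ))
    have hcont2 : Continuous fun s' : Fin n → ℝ => G (u2 s') :=
      hGc.comp (continuous_combo (x 0) (fun j => x j.succ.succ))
    have hint1 : IntegrableOn (fun s' => G (u1 s') / (d:ℂ)) T0 volume :=
      ((hcont1.div_const _).continuousOn).integrableOn_compact (isCompact_T n)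
    have hint2 : IntegrableOn (fun s' => G (u2 s') / (d:ℂ)) T0 volume :=
      ((hcont2.div_const _).continuousOn).integrableOn_compact (isCompact_T n)
    rw [integral_sub hint1 hint2, integral_div, integral_div]
    -- IH applications
    have hf' : ContDiff ℝ n f := hf.of_le (by exact_mod_cast Nat.cast_le.2 (Nat.le_succ n))
    have hx1 : Function.Injective (x ∘ Fin.succ) := hx.comp (Fin.succ_injective _)
    have hx2 : Function.Injective (x ∘ Fin.succAbove 1) :=
      hx.comp Fin.succAbove_right_injective
    have hsa0 : (1 : Fin (n+2)).succAbove 0 = 0 := by simp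
    have hsas : ∀ j : Fin n, (1 : Fin (n+2)).succAbove j.succ = j.succ.succ := fun j => by
      rw [← Fin.succ_zero_eq_one, Fin.succ_succAbove_succ, Fin.succAbove_zero]
    have e1 := IH f hf' (x ∘ Fin.succ) hx1
    have e2 := IH f hf' (x ∘ Fin.succAbove 1) hx2
    simp only [Function.comp_apply, Fin.succ_zero_eq_one] at e1
    simp only [Function.comp_apply, hsa0, hsas] at e2
    simp only [hGdef, hu1, hu2]
    rw [← e1, ← e2]
    have hrec := divDiff_rec f hx
    have hcast : ((x 1 : ℂ) - (x 0 : ℂ)) = (d : ℂ) := by rw [hd]; push_cast; ring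
    rw [hcast] at hrec
    rw [div_sub_div_same, hrec, mul_div_cancel_left₀ _ hdC]

/-- Let `n ≥ 1`, `f : ℝ → ℂ` be `n` times continuously differentiable, and `w : ℝ → ℂ`
integrable with `f⁽ⁿ⁾(x) = ∫ w(t)·e^{ixt} dt` for all `x`.  Then for pairwise distinct
`x₀,…,x_n`:
`f^{[n]}(x₀,…,x_n) = ∫_{T_n} ∫_ℝ w(t)·exp(it(s₀x₀ + s₁x₁ + ⋯ + s_nx_n)) dt ds`,
where `T_n = {s ∈ ℝⁿ : s_j ≥ 0, Σ s_j ≤ 1}` (Lebesgue measure) and `s₀ = 1 − Σ s_j`. -/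
theorem stmt2 (n : ℕ) (hn : 1 ≤ n) (f : ℝ → ℂ) (hf : ContDiff ℝ n f)
    (w : ℝ → ℂ) (hw : Integrable w)
    (hrep : ∀ x : ℝ, iteratedDeriv n f x = ∫ t : ℝ, w t * Complex.exp (Complex.I * x * t))
    (x : Fin (n + 1) → ℝ) (hx : Function.Injective x) :
    divDiff f x =
      ∫ s in {s : Fin n → ℝ | (∀ j, 0 ≤ s j) ∧ ∑ j, s j ≤ 1},
        ∫ t : ℝ, w t * Complex.exp (Complex.I * t *
          (((1 - ∑ j, s j) * x 0 + ∑ j, s j * x (Fin.succ j) : ℝ) : ℂ)) := by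
  rw [HG n f hf x hx]
  refine setIntegral_congr_fun (isClosed_T n).measurableSet fun s _ => ?_
  rw [hrep]
  refine integral_congr_ae (Filter.Eventually.of_forall fun t => ?_)
  ring_nf
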